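/- For a merge algebra A the following conditions are equivalent: (1) A is degenerate; (2) σ̄(x) = x holds identically for every finite permutation σ; (3) x ⋆_n y = y holds identically for every n ∈ ω. -/
import Mathlib


universe u

open scoped Classical

/-- A finite permutation of ω: an element of S_ω, i.e. a permutation moving
only finitely many points. -/
def FinPerm (σ : Equiv.Perm ℕ) : Prop := {n : ℕ | σ n ≠ n}.Finite

/-- The raw operations of a merge algebra: the binary merges `⋆_n` and the
actions `σ̄` of (finite) permutations. -/
structure MergeOps (A : Type u) where
  star : ℕ → A → A → A
  bar : Equiv.Perm ℕ → A → A

namespace MergeOps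

variable {A : Type u}

/-- `chain g k = ((g 0 ⋆_1 g 1) ⋆_2 g 2) … ⋆_k (g k)`. -/
def chain (M : MergeOps A) (g : ℕ → A) : ℕ → A
  | 0 => g 0
  | i + 1 => M.star (i + 1) (M.chain g i) (g (i + 1))

/-- `chainStar g k y = ((…(g 0 ⋆_1 g 1) ⋆_2 …) ⋆_{k-1} g (k-1)) ⋆_k y`. -/
def chainStar (M : MergeOps A) (g : ℕ → A) (k : ℕ) (y : A) : A :=
  match k with
  | 0 => y
  | k + 1 => M.star (k + 1) (M.chain g k) y

/-- The `n`-coordinate of `x` relative to the coordinator `pt`: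
`x[n] = τ̄^n_0(x) ⋆_1 pt`. -/
def coord (M : MergeOps A) (pt x : A) (n : ℕ) : A :=
  M.star 1 (M.bar (Equiv.swap 0 n) x) pt

end MergeOps

/-- A merge algebra: operations `⋆_n` and `σ̄` satisfying axioms (B1)–(B7). -/
structure MergeAlgebra (A : Type u) extends MergeOps A where
  /-- (B1) each `⋆_n` is associative -/
  star_assoc : ∀ (n : ℕ) (x y z : A), star n (star n x y) z = star n x (star n y z)
  /-- (B1) each `⋆_n` is idempotent -/
  star_idem : ∀ (n : ℕ) (x : A), star n x x = x
  /-- (B2) -/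
  star_zero : ∀ x y : A, star 0 x y = y
  /-- (B3), first part (k ≥ n) -/
  B3a : ∀ {n k : ℕ}, n ≤ k → ∀ x y z : A, star n (star k x y) z = star n x z
  /-- (B3), second part (k ≥ n) -/
  B3b : ∀ {n k : ℕ}, n ≤ k → ∀ x y z : A, star k x (star n y z) = star k x z
  /-- (B4) (k < n) -/
  B4 : ∀ {n k : ℕ}, k < n → ∀ x y z : A, star n (star k x y) z = star k x (star n y z)
  /-- (B5) `σ̄(τ̄(x)) = (τ∘σ)‾(x)` -/
  B5 : ∀ σ τ : Equiv.Perm ℕ, FinPerm σ → FinPerm τ → ∀ x : A,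
      bar σ (bar τ x) = bar (τ * σ) x
  /-- (B5) `ῑ(x) = x` -/
  bar_id : ∀ x : A, bar 1 x = x
  /-- (B6): for `n ≤ k` and `σ` a permutation of `k`, with `f i = x` iff `σ i < n`:
  `σ̄(x ⋆_n y) = ((…(σ̄(f 0) ⋆_1 σ̄(f 1)) ⋆_2 …) ⋆_{k-1} σ̄(f (k-1))) ⋆_k y`. -/
  B6 : ∀ {n k : ℕ}, n ≤ k → ∀ σ : Equiv.Perm ℕ, (∀ i, k ≤ i → σ i = i) →
      ∀ x y : A, bar σ (star n x y) =
        toMergeOps.chainStar (fun i => bar σ (if σ i < n then x else y)) k y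
  /-- (B7) -/
  B7 : ∀ {m n : ℕ} (σ τ : Equiv.Perm ℕ), FinPerm σ → FinPerm τ →
      (∀ i, m ≤ i → i < n → σ i = τ i) →
      ∀ x y z : A, star n (star m z (bar σ x)) y = star n (star m z (bar τ x)) y

/-- A merge algebra is degenerate if all permutation actions are trivial and
`x ⋆_n y = y` for all `n`. -/
def MergeAlgebra.Degenerate {A : Type u} (M : MergeAlgebra A) : Prop :=
  (∀ σ : Equiv.Perm ℕ, FinPerm σ → ∀ x : A, M.bar σ x = x) ∧
    (∀ (n : ℕ) (x y : A), M.star n x y = y)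

section Aux

variable {A : Type u} (M : MergeAlgebra A)

lemma finPerm_swap (a b : ℕ) : FinPerm (Equiv.swap a b) := by
  apply Set.Finite.subset ((Set.finite_singleton b).insert a)
  intro n hn
  simp only [Set.mem_setOf_eq] at hn
  by_contra h
  simp only [Set.mem_insert_iff, Set.mem_singleton_iff, not_or] at h
  exact hn (Equiv.swap_apply_of_ne_of_ne h.1 h.2)

lemma MergeOps.chain_zero (N : MergeOps A) (g : ℕ → A) : N.chain g 0 = g 0 := rfl

lemma MergeOps.chain_succ (N : MergeOps A) (g : ℕ → A) (k : ℕ) :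
    N.chain g (k + 1) = N.star (k + 1) (N.chain g k) (g (k + 1)) := rfl

lemma MergeOps.chainStar_succ (N : MergeOps A) (g : ℕ → A) (k : ℕ) (y : A) :
    N.chainStar g (k + 1) y = N.star (k + 1) (N.chain g k) y := rfl

lemma chain_const (g : ℕ → A) (y : A) :
    ∀ m : ℕ, (∀ i ≤ m, g i = y) → M.toMergeOps.chain g m = y := by
  intro m
  induction m with
  | zero => intro h; simpa [MergeOps.chain_zero] using h 0 le_rfl
  | succ p ih =>
    intro h
    rw [MergeOps.chain_succ, ih (fun i hi => h i (hi.trans (Nat.le_succ p))),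
      h (p + 1) le_rfl, M.star_idem]

lemma chainXY (g : ℕ → A) (x y : A) (m : ℕ)
    (h1 : ∀ i < m, g i = x) (h2 : g m = y) :
    M.toMergeOps.chain g m = M.star m x y := by
  cases m with
  | zero => rw [MergeOps.chain_zero, h2, M.star_zero]
  | succ p =>
    rw [MergeOps.chain_succ, chain_const M g x p (fun i hi => h1 i (by omega)), h2]

lemma lemA (hb : ∀ σ : Equiv.Perm ℕ, FinPerm σ → ∀ x : A, M.bar σ x = x)
    (m : ℕ) (x y : A) :
    M.star 1 x y = M.star (m + 1) y (M.star (m + 2) x y) := by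
  have hfix : ∀ i, m + 2 ≤ i → (Equiv.swap 0 (m + 1)) i = i := fun i hi =>
    Equiv.swap_apply_of_ne_of_ne (by omega) (by omega)
  have h6 := M.B6 (show 1 ≤ m + 2 by omega) (Equiv.swap 0 (m + 1)) hfix x y
  simp only [hb _ (finPerm_swap 0 (m + 1))] at h6
  have hg : (fun i => if (Equiv.swap 0 (m + 1)) i < 1 then x else y)
      = (fun i => if i = m + 1 then x else y) := by
    funext i
    rcases eq_or_ne i (m + 1) with rfl | h
    · simp [Equiv.swap_apply_right]
    · rcases eq_or_ne i 0 with rfl | h0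
      · simp [Equiv.swap_apply_left]
      · rw [Equiv.swap_apply_of_ne_of_ne h0 h]
        simp [Nat.lt_one_iff, h0, h]
  rw [hg] at h6
  have hc : M.toMergeOps.chain (fun i => if i = m + 1 then x else y) m = y :=
    chain_const M _ y m (fun i hi => by simp [show i ≠ m + 1 by omega])
  rw [show m + 2 = (m + 1) + 1 from rfl, MergeOps.chainStar_succ,
    MergeOps.chain_succ, hc] at h6
  simp only [if_pos rfl] at h6
  rw [M.B4 (show m + 1 < m + 2 by omega)] at h6
  exact h6

lemma lemB (hb : ∀ σ : Equiv.Perm ℕ, FinPerm σ → ∀ x : A, M.bar σ x = x)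
    (m : ℕ) (x y : A) :
    M.star (m + 1) x y = M.star m x (M.star 1 x y) := by
  have hfix : ∀ i, m + 2 ≤ i → (Equiv.swap m (m + 1)) i = i := fun i hi =>
    Equiv.swap_apply_of_ne_of_ne (by omega) (by omega)
  have h6 := M.B6 (show m + 1 ≤ m + 2 by omega) (Equiv.swap m (m + 1)) hfix x y
  simp only [hb _ (finPerm_swap m (m + 1))] at h6
  set g : ℕ → A := fun i => if (Equiv.swap m (m + 1)) i < m + 1 then x else y with hgdef
  have hgm1 : g (m + 1) = x := by
    simp only [hgdef, Equiv.swap_apply_right]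
    simp
  have hcm : M.toMergeOps.chain g m = M.star m x y := by
    apply chainXY
    · intro i hi
      simp only [hgdef, Equiv.swap_apply_of_ne_of_ne (show i ≠ m by omega)
        (show i ≠ m + 1 by omega)]
      simp [show i < m + 1 by omega]
    · simp only [hgdef, Equiv.swap_apply_left]
      simp
  rw [show m + 2 = (m + 1) + 1 from rfl, MergeOps.chainStar_succ,
    MergeOps.chain_succ, hcm, hgm1] at h6
  rw [M.B4 (show m + 1 < m + 2 by omega), M.B4 (show m < m + 1 by omega),
    ← lemA M hb m x y] at h6
  exact h6

end Aux

/-- STATEMENT 5: for a merge algebra `A` the following are equivalent: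
(1) `A` is degenerate; (2) `σ̄(x) = x` for every finite permutation `σ`;
(3) `x ⋆_n y = y` for every `n`. -/
theorem degenerate_tfae {A : Type u} (M : MergeAlgebra A) :
    List.TFAE
      [M.Degenerate,
        ∀ σ : Equiv.Perm ℕ, FinPerm σ → ∀ x : A, M.bar σ x = x,
        ∀ (n : ℕ) (x y : A), M.star n x y = y] := by
  tfae_have h12 : 1 → 2 := fun h => h.1
  tfae_have h13 : 1 → 3 := fun h => h.2
  tfae_have h23 : 2 → 3 := by
    intro hb
    have star1 : ∀ x y : A, M.star 1 x y = y := by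
      intro x y
      have hD : M.star 2 x y = M.star 1 x y := by
        have h := lemB M hb 1 x y
        rw [h, ← M.star_assoc, M.star_idem]
      have hA := lemA M hb 0 x y
      norm_num at hA
      rw [hD, M.B3b (le_refl 1), M.star_idem] at hA
      exact hA
    intro n
    induction n with
    | zero => exact M.star_zero
    | succ m ih =>
      intro x y
      rw [lemB M hb m x y, star1, ih]
  tfae_have h32 : 3 → 2 := by
    intro h3 σ hσ x
    obtain ⟨k, hk⟩ : ∃ k, ∀ i, k ≤ i → σ i = i := by
      obtain ⟨k, hk⟩ := hσ.bddAbove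
      refine ⟨k + 1, fun i hi => ?_⟩
      by_contra h
      exact absurd (hk (show i ∈ {n : ℕ | σ n ≠ n} from h)) (by omega)
    have h6 := M.B6 (Nat.zero_le k) σ hk x x
    rw [M.star_zero] at h6
    rw [h6]
    cases k with
    | zero => rfl
    | succ p => exact h3 (p + 1) _ x
  tfae_have h21 : 2 → 1 := fun h => ⟨h, h23 h⟩
  tfae_have h31 : 3 → 1 := fun h => ⟨h32 h, h⟩
  tfae_finish
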